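/- Let (X, 𝒞) be an instance of 3-SAT and let (G, k) be the reduction graph built from (X, 𝒞). Then (X, 𝒞) has a satisfying truth assignment if and only if G has a vertex cover of size at most k. -/

import Mathlib

open SimpleGraph

universe u

/-- A matching: a set of edges of `G` that are pairwise vertex-disjoint. -/
def IsMatching {W : Type u} (G : SimpleGraph W) (M : Set (Sym2 W)) : Prop :=
  M ⊆ G.edgeSet ∧ ∀ e ∈ M, ∀ e' ∈ M, e ≠ e' → ∀ v : W, v ∈ e → v ∉ e'

/-- `v` is matched by `M`. -/
def Matched {W : Type u} (M : Set (Sym2 W)) (v : W) : Prop := ∃ w : W, s(v, w) ∈ M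

open scoped Classical in
/-- `rank G pref M v = pref v (M(v))`, with the convention `|N(v)|+1` if `v` is unmatched. -/
noncomputable def rank {W : Type u} (G : SimpleGraph W) (pref : W → W → ℕ)
    (M : Set (Sym2 W)) (v : W) : ℕ :=
  if h : ∃ w : W, s(v, w) ∈ M then pref v h.choose else (G.neighborSet v).ncard + 1

/-- The number of vertices preferring `M` over `M'`. -/
noncomputable def vote {W : Type u} (G : SimpleGraph W) (pref : W → W → ℕ)
    (M M' : Set (Sym2 W)) : ℕ :=
  {v : W | rank G pref M v < rank G pref M' v}.ncard

/-- A popular matching: no other matching is more popular. -/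
def IsPopular {W : Type u} (G : SimpleGraph W) (pref : W → W → ℕ) (M : Set (Sym2 W)) : Prop :=
  IsMatching G M ∧
    ∀ M' : Set (Sym2 W), IsMatching G M' → vote G pref M' M ≤ vote G pref M M'

/-- Each vertex has a strict preference list: `pref v` is a bijection from the
neighborhood of `v` onto `{1, …, |N(v)|}`. -/
def HasPref {W : Type u} (G : SimpleGraph W) (pref : W → W → ℕ) : Prop :=
  ∀ v : W, Set.BijOn (pref v) (G.neighborSet v) (Set.Icc 1 (G.neighborSet v).ncard)

/-- The edge `e ∉ M` is labeled `+2` by `label_M` (given rank function `rk`):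
both endpoints prefer each other over their status in `M`. -/
def EdgePlus {W : Type u} (pref : W → W → ℕ) (rk : W → ℕ) (e : Sym2 W) : Prop :=
  ∃ x y : W, e = s(x, y) ∧ pref x y < rk x ∧ pref y x < rk y

/-- The edge `e ∉ M` is labeled `-2` by `label_M` (given rank function `rk`):
both endpoints prefer their status in `M` over each other. -/
def EdgeMinus {W : Type u} (pref : W → W → ℕ) (rk : W → ℕ) (e : Sym2 W) : Prop :=
  ∃ x y : W, e = s(x, y) ∧ rk x < pref x y ∧ rk y < pref y x

/-- The graph `G_M`: the spanning subgraph of `G` consisting of the edges of `M`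
together with the edges not labeled `-2`. -/
def GMgraph {W : Type u} (G : SimpleGraph W) (pref : W → W → ℕ) (M : Set (Sym2 W)) :
    SimpleGraph W where
  Adj x y := G.Adj x y ∧ (s(x, y) ∈ M ∨ ¬ EdgeMinus pref (rank G pref M) s(x, y))
  symm := by
    constructor
    intro x y h
    refine ⟨h.1.symm, ?_⟩
    rw [Sym2.eq_swap]
    exact h.2
  loopless := ⟨fun x h => G.irrefl h.1⟩

/-- Consecutive edges alternate between `M` and non-`M`. -/
def altRel {W : Type u} (M : Set (Sym2 W)) (e e' : Sym2 W) : Prop := e ∈ M ↔ e' ∉ M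

/-- An alternating path (with respect to `M`) in a graph `G'`. -/
def IsAltPath {W : Type u} (M : Set (Sym2 W)) {G' : SimpleGraph W} {x y : W}
    (p : G'.Walk x y) : Prop :=
  p.IsPath ∧ List.Chain' (altRel M) p.edges ∧
    (∀ e, p.edges.head? = some e → e ∉ M → ¬ Matched M x) ∧
    (∀ e, p.edges.getLast? = some e → e ∉ M → ¬ Matched M y)

/-- An alternating cycle (with respect to `M`) in a graph `G'`:
the edges alternate cyclically between `M` and non-`M`. -/
def IsAltCycle {W : Type u} (M : Set (Sym2 W)) {G' : SimpleGraph W} {x : W}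
    (p : G'.Walk x x) : Prop :=
  p.IsCycle ∧ List.Chain' (altRel M) (p.edges ++ p.edges.take 1)

/-- `l` contains at least one edge labeled `+2`. -/
def OnePlusEdge {W : Type u} (pref : W → W → ℕ) (rk : W → ℕ) (l : List (Sym2 W)) : Prop :=
  ∃ e ∈ l, EdgePlus pref rk e

/-- `l` contains at least two edges labeled `+2`. -/
def TwoPlusEdges {W : Type u} (pref : W → W → ℕ) (rk : W → ℕ) (l : List (Sym2 W)) : Prop :=
  ∃ e ∈ l, ∃ e' ∈ l, e ≠ e' ∧ EdgePlus pref rk e ∧ EdgePlus pref rk e'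

/-- A vertex cover. -/
def IsVC {V : Type u} (G : SimpleGraph V) (U : Set V) : Prop :=
  ∀ ⦃x y : V⦄, G.Adj x y → x ∈ U ∨ y ∈ U

/-- The vertices of the graph built from a 3-SAT instance: `v x b` is the vertex of the
literal on variable `x` with polarity `b`; `u c x b` is the vertex `u^C_ℓ` for the clause
`c = C` and the literal `ℓ = (x, b) ∈ C`. -/
inductive RVert (X : Type u) : Type u where
  | v : X → Bool → RVert X
  | u : Finset (X × Bool) → X → Bool → RVert X
deriving DecidableEq

/-- Which formal vertices are really vertices of the reduction graph. -/
def RVert.valid {X : Type u} (C : Finset (Finset (X × Bool))) : RVert X → Prop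
  | .v _ _ => True
  | .u c x b => c ∈ C ∧ (x, b) ∈ c

/-- The edges of the reduction graph, up to symmetry. -/
def satAdj {X : Type u} : RVert X → RVert X → Prop
  | .v x b, .v x' b' => x = x' ∧ b ≠ b'
  | .u c x b, .u c' x' b' => c = c' ∧ (x, b) ≠ (x', b')
  | .u _ x b, .v x' b' => x = x' ∧ b = b'
  | .v x b, .u _ x' b' => x = x' ∧ b = b'

/-- The vertex set of the reduction graph built from a 3-SAT instance. -/
def SATVert (X : Type u) (C : Finset (Finset (X × Bool))) : Type u :=
  {r : RVert X // RVert.valid C r}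

/-- The reduction graph `G` built from a 3-SAT instance. -/
def SATgraph (X : Type u) (C : Finset (Finset (X × Bool))) : SimpleGraph (SATVert X C) where
  Adj a b := a ≠ b ∧ (satAdj a.1 b.1 ∨ satAdj b.1 a.1)
  symm := ⟨fun _ _ h => ⟨h.1.symm, h.2.symm⟩⟩
  loopless := ⟨fun _ h => h.1 rfl⟩

/-- The truth assignment `α` satisfies every clause of `C`. -/
def Satisfies {X : Type u} (α : X → Bool) (C : Finset (Finset (X × Bool))) : Prop :=
  ∀ c ∈ C, ∃ l ∈ c, α l.1 = l.2

instance {X : Type u} [DecidableEq X] {C : Finset (Finset (X × Bool))} :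
    DecidableEq (SATVert X C) := by unfold SATVert; infer_instance

/-- index map -/
def satIdx {X : Type u} {C : Finset (Finset (X × Bool))} : SATVert X C → X ⊕ Finset (X × Bool)
  | ⟨.v x _, _⟩ => .inl x
  | ⟨.u c _ _, _⟩ => .inr c


/-- **3-SAT reduces to Vertex Cover.**  A 3-SAT instance `(X, C)` is satisfiable if and
only if the reduction graph has a vertex cover of size at most `k = |X| + 2|C|`. -/
theorem sat_iff_vertex_cover {X : Type u} [Fintype X] [DecidableEq X]
    (C : Finset (Finset (X × Bool))) (hC : ∀ c ∈ C, c.card = 3) :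
    (∃ α : X → Bool, Satisfies α C) ↔
      (∃ S : Set (SATVert X C), S.Finite ∧ S.ncard ≤ Fintype.card X + 2 * C.card ∧
        IsVC (SATgraph X C) S) := by
  constructor
  · rintro ⟨α, hα⟩
    choose l hl1 hl2 using hα
    set F1 : Finset (SATVert X C) :=
      Finset.univ.image fun x => (⟨.v x (α x), trivial⟩ : SATVert X C) with hF1
    set F2 : Finset (SATVert X C) :=
      C.attach.biUnion fun c => ((c.1.erase (l c.1 c.2)).attach).image
        fun p => (⟨.u c.1 p.1.1 p.1.2, ⟨c.2, Finset.mem_of_mem_erase p.2⟩⟩ : SATVert X C) with hF2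
    refine ⟨↑(F1 ∪ F2), Finset.finite_toSet _, ?_, ?_⟩
    · rw [Set.ncard_coe_finset]
      calc (F1 ∪ F2).card ≤ F1.card + F2.card := Finset.card_union_le _ _
        _ ≤ Fintype.card X + 2 * C.card := by
            gcongr
            · exact Finset.card_image_le.trans (le_of_eq Finset.card_univ)
            · calc F2.card ≤ ∑ c ∈ C.attach, (((c.1.erase (l c.1 c.2)).attach).image
                    (fun p => (⟨.u c.1 p.1.1 p.1.2, ⟨c.2, Finset.mem_of_mem_erase p.2⟩⟩ : SATVert X C))).card :=
                  Finset.card_biUnion_le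
                _ ≤ ∑ c ∈ C.attach, 2 := by
                    refine Finset.sum_le_sum fun c _ => ?_
                    calc _ ≤ ((c.1.erase (l c.1 c.2)).attach).card := Finset.card_image_le
                      _ = (c.1.erase (l c.1 c.2)).card := Finset.card_attach
                      _ = c.1.card - 1 := Finset.card_erase_of_mem (hl1 c.1 c.2)
                      _ = 2 := by rw [hC c.1 c.2]
                _ = 2 * C.card := by simp [Finset.sum_const, Finset.card_attach, mul_comm]
    · rintro ⟨ra, hva⟩ ⟨rb, hvb⟩ hadj0
      obtain ⟨hne, hadj⟩ : _ ≠ _ ∧ (satAdj ra rb ∨ satAdj rb ra) := hadj0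
      have memF1 : ∀ (x : X) (hv : RVert.valid C (.v x (α x))),
          (⟨.v x (α x), hv⟩ : SATVert X C) ∈ F1 ∪ F2 := by
        intro x hv
        exact Finset.mem_union_left _ (Finset.mem_image.2 ⟨x, Finset.mem_univ _, rfl⟩)
      have memF2 : ∀ (c : Finset (X × Bool)) (x : X) (b : Bool) (hv : RVert.valid C (.u c x b)),
          (x, b) ≠ l c hv.1 → (⟨.u c x b, hv⟩ : SATVert X C) ∈ F1 ∪ F2 := by
        intro c x b hv hne'
        refine Finset.mem_union_right _ (Finset.mem_biUnion.2 ⟨⟨c, hv.1⟩, Finset.mem_attach _ _, ?_⟩)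
        exact Finset.mem_image.2 ⟨⟨(x, b), Finset.mem_erase.2 ⟨hne', hv.2⟩⟩, Finset.mem_attach _ _, rfl⟩
      -- main case analysis
      cases ra with
      | v x b =>
        cases rb with
        | v x' b' =>
          simp only [satAdj] at hadj
          obtain ⟨rfl, hbb⟩ : x = x' ∧ b ≠ b' := by
            rcases hadj with ⟨rfl, h⟩ | ⟨rfl, h⟩
            · exact ⟨rfl, h⟩
            · exact ⟨rfl, h.symm⟩
          by_cases hb : b = α x
          · subst hb; exact Or.inl (memF1 x hva)
          · have : b' = α x := by
              cases b <;> cases b' <;> cases h : α x <;> simp_all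
            subst this; exact Or.inr (memF1 x hvb)
        | u c' x' b' =>
          simp only [satAdj] at hadj
          obtain ⟨rfl, rfl⟩ : x = x' ∧ b = b' := by
            rcases hadj with h | h
            · exact h
            · exact ⟨h.1.symm, h.2.symm⟩
          by_cases hb : b = α x
          · subst hb; exact Or.inl (memF1 x hva)
          · refine Or.inr (memF2 c' x b hvb ?_)
            intro h
            have := hl2 c' hvb.1
            rw [← h] at this
            exact hb this.symm
      | u c x b =>
        cases rb with
        | v x' b' =>
          simp only [satAdj] at hadj
          obtain ⟨rfl, rfl⟩ : x = x' ∧ b = b' := by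
            rcases hadj with h | h
            · exact h
            · exact ⟨h.1.symm, h.2.symm⟩
          by_cases hb : b = α x
          · subst hb; exact Or.inr (memF1 x hvb)
          · refine Or.inl (memF2 c x b hva ?_)
            intro h
            have := hl2 c hva.1
            rw [← h] at this
            exact hb this.symm
        | u c' x' b' =>
          simp only [satAdj] at hadj
          obtain ⟨rfl, hll⟩ : c = c' ∧ (x, b) ≠ (x', b') := by
            rcases hadj with ⟨rfl, h⟩ | ⟨rfl, h⟩
            · exact ⟨rfl, h⟩
            · exact ⟨rfl, h.symm⟩
          by_cases h1 : (x, b) = l c hva.1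
          · refine Or.inr (memF2 c x' b' hvb ?_)
            have : hva.1 = hvb.1 := rfl
            rw [← this, ← h1]
            exact fun h => hll h.symm
          · exact Or.inl (memF2 c x b hva h1)
  · rintro ⟨S, hfin, hcard, hvc⟩
    classical
    set T : Finset (SATVert X C) := hfin.toFinset with hT
    have hmemT : ∀ w : SATVert X C, w ∈ T ↔ w ∈ S := fun w => hfin.mem_toFinset
    set a : X → ℕ := fun x => (T.filter fun w => satIdx w = Sum.inl x).card with ha
    set b : Finset (X × Bool) → ℕ :=
      fun c => (T.filter fun w => satIdx w = Sum.inr c).card with hb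
    -- injectivity helpers
    have uinj : ∀ (c' : Finset (X × Bool)) (p q : X × Bool) (h1 : RVert.valid C (.u c' p.1 p.2))
        (h2 : RVert.valid C (.u c' q.1 q.2)),
        (⟨.u c' p.1 p.2, h1⟩ : SATVert X C) = ⟨.u c' q.1 q.2, h2⟩ → p = q := by
      intro c' p q h1 h2 h
      have := congrArg (fun z : SATVert X C => z.1) h
      simp only [RVert.u.injEq] at this
      exact Prod.ext this.2.1 this.2.2
    -- the fiberwise count
    have hfib : T.card = (∑ x : X, a x) + ∑ c ∈ C, b c := by
      have hmaps : ∀ w ∈ T, satIdx w ∈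
          (Finset.univ.image (Sum.inl : X → X ⊕ Finset (X × Bool))) ∪ (C.image Sum.inr) := by
        rintro ⟨r, hv⟩ _
        cases r with
        | v x bb => exact Finset.mem_union_left _ (Finset.mem_image.2 ⟨x, Finset.mem_univ _, rfl⟩)
        | u c x bb => exact Finset.mem_union_right _ (Finset.mem_image.2 ⟨c, hv.1, rfl⟩)
      rw [Finset.card_eq_sum_card_fiberwise hmaps, Finset.sum_union, Finset.sum_image,
        Finset.sum_image]
      · intro _ _ _ _ h; exact Sum.inr.inj h
      · intro _ _ _ _ h; exact Sum.inl.inj h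
      · simp [Finset.disjoint_left]
    -- edges
    have adjvv : ∀ x : X, (SATgraph X C).Adj ⟨.v x true, trivial⟩ ⟨.v x false, trivial⟩ := by
      intro x
      show _ ≠ _ ∧ (satAdj _ _ ∨ satAdj _ _)
      refine ⟨?_, Or.inl ⟨rfl, by simp⟩⟩
      intro h
      have := congrArg (fun z : SATVert X C => z.1) h
      simp at this
    have ha1 : ∀ x : X, 1 ≤ a x := by
      intro x
      rcases hvc (adjvv x) with h | h
      · exact Finset.card_pos.2 ⟨_, Finset.mem_filter.2 ⟨(hmemT _).2 h, rfl⟩⟩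
      · exact Finset.card_pos.2 ⟨_, Finset.mem_filter.2 ⟨(hmemT _).2 h, rfl⟩⟩
    -- triangle vertices
    have adjuu : ∀ (c : Finset (X × Bool)) (hc : c ∈ C) (p q : X × Bool) (hp : p ∈ c) (hq : q ∈ c),
        p ≠ q → (SATgraph X C).Adj ⟨.u c p.1 p.2, ⟨hc, hp⟩⟩ ⟨.u c q.1 q.2, ⟨hc, hq⟩⟩ := by
      intro c hc p q hp hq hpq
      show _ ≠ _ ∧ (satAdj _ _ ∨ satAdj _ _)
      exact ⟨fun h => hpq (uinj c p q _ _ h), Or.inl ⟨rfl, by simpa using hpq⟩⟩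
    have hb2 : ∀ c ∈ C, 2 ≤ b c := by
      intro c hc
      obtain ⟨p, q, r, hpq, hpr, hqr, hceq⟩ := Finset.card_eq_three.1 (hC c hc)
      have hp : p ∈ c := by rw [hceq]; simp
      have hq : q ∈ c := by rw [hceq]; simp
      have hr : r ∈ c := by rw [hceq]; simp
      have memf : ∀ (m : X × Bool) (hm : m ∈ c), (⟨.u c m.1 m.2, ⟨hc, hm⟩⟩ : SATVert X C) ∈ S →
          (⟨.u c m.1 m.2, ⟨hc, hm⟩⟩ : SATVert X C) ∈ T.filter fun w => satIdx w = Sum.inr c :=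
        fun m hm h1 => (Finset.mem_filter (s := T)).2 ⟨(hmemT _).2 h1, rfl⟩
      rw [hb]
      refine Finset.one_lt_card_iff.2 ?_
      rcases hvc (adjuu c hc p q hp hq hpq) with h1 | h1
      · rcases hvc (adjuu c hc q r hq hr hqr) with h2 | h2
        · exact ⟨_, _, memf p hp h1, memf q hq h2, fun h => hpq (uinj c p q _ _ h)⟩
        · exact ⟨_, _, memf p hp h1, memf r hr h2, fun h => hpr (uinj c p r _ _ h)⟩
      · rcases hvc (adjuu c hc p r hp hr hpr) with h2 | h2
        · exact ⟨_, _, memf q hq h1, memf p hp h2, fun h => hpq.symm (uinj c q p _ _ h)⟩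
        · exact ⟨_, _, memf q hq h1, memf r hr h2, fun h => hqr (uinj c q r _ _ h)⟩
    -- exactness
    have hTcard : T.card = S.ncard := (Set.ncard_eq_toFinset_card S hfin).symm
    have hsum1 : Fintype.card X ≤ ∑ x : X, a x := by
      calc Fintype.card X = ∑ _x : X, 1 := by simp
        _ ≤ ∑ x : X, a x := Finset.sum_le_sum fun x _ => ha1 x
    have hsum2 : 2 * C.card ≤ ∑ c ∈ C, b c := by
      calc 2 * C.card = ∑ _c ∈ C, 2 := by simp [mul_comm]
        _ ≤ ∑ c ∈ C, b c := Finset.sum_le_sum fun c hc => hb2 c hc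
    have htot : (∑ x : X, a x) + ∑ c ∈ C, b c ≤ Fintype.card X + 2 * C.card := by
      rw [← hfib, hTcard]; exact hcard
    have hEA : (∑ x : X, a x) = ∑ _x : X, 1 := by
      have : (∑ x : X, a x) = Fintype.card X := by omega
      simpa using this
    have hEB : (∑ c ∈ C, b c) = ∑ _c ∈ C, 2 := by
      have h2 : (∑ _c ∈ C, 2) = 2 * C.card := by simp [mul_comm]
      omega
    have haex : ∀ x : X, a x = 1 := by
      intro x
      have := (Finset.sum_eq_sum_iff_of_le (fun i (_ : i ∈ Finset.univ) => ha1 i)).1 hEA.symm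
      exact (this x (Finset.mem_univ x)).symm
    have hbex : ∀ c ∈ C, b c = 2 := by
      intro c hc
      have := (Finset.sum_eq_sum_iff_of_le (fun i hi => hb2 i hi)).1 hEB.symm
      exact (this c hc).symm
    -- the assignment
    refine ⟨fun x => if (⟨.v x true, trivial⟩ : SATVert X C) ∈ S then true else false, ?_⟩
    intro c hc
    obtain ⟨p, q, r, hpq, hpr, hqr, hceq⟩ := Finset.card_eq_three.1 (hC c hc)
    have hp : p ∈ c := by rw [hceq]; simp
    have hq : q ∈ c := by rw [hceq]; simp
    have hr : r ∈ c := by rw [hceq]; simp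
    -- some triangle vertex is not in S
    have key : ∃ (m : X × Bool) (hm : m ∈ c),
        (⟨.u c m.1 m.2, ⟨hc, hm⟩⟩ : SATVert X C) ∉ S := by
      by_contra h
      push_neg at h
      have hsub : ∀ (m : X × Bool) (hm : m ∈ c), (⟨.u c m.1 m.2, ⟨hc, hm⟩⟩ : SATVert X C) ∈
          T.filter fun w => satIdx w = Sum.inr c := by
        intro m hm
        exact (Finset.mem_filter (s := T)).2 ⟨(hmemT _).2 (h m hm), rfl⟩
      have h3 : ({⟨.u c p.1 p.2, ⟨hc, hp⟩⟩, ⟨.u c q.1 q.2, ⟨hc, hq⟩⟩, ⟨.u c r.1 r.2, ⟨hc, hr⟩⟩} :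
          Finset (SATVert X C)) ⊆ T.filter fun w => satIdx w = Sum.inr c := by
        intro w hw
        replace hw : w = _ ∨ w = _ ∨ w = _ :=
          (Finset.mem_insert.1 hw).imp_right fun h => (Finset.mem_insert.1 h).imp_right Finset.mem_singleton.1
        rcases hw with rfl | rfl | rfl
        · exact hsub p hp
        · exact hsub q hq
        · exact hsub r hr
      have hc3 : ({⟨.u c p.1 p.2, ⟨hc, hp⟩⟩, ⟨.u c q.1 q.2, ⟨hc, hq⟩⟩, ⟨.u c r.1 r.2, ⟨hc, hr⟩⟩} :
          Finset (SATVert X C)).card = 3 := by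
        erw [Finset.card_insert_of_notMem, Finset.card_insert_of_notMem, Finset.card_singleton]
        · erw [Finset.mem_singleton]
          exact fun h' => hqr (uinj c q r _ _ h')
        · erw [Finset.mem_insert, Finset.mem_singleton]
          rintro (h' | h')
          · exact hpq (uinj c p q _ _ h')
          · exact hpr (uinj c p r _ _ h')
      have hge : 3 ≤ b c := by
        rw [hb]
        have := Finset.card_le_card h3
        rwa [hc3] at this
      have := hbex c hc
      omega
    obtain ⟨m, hm, hmS⟩ := key
    refine ⟨m, hm, ?_⟩
    -- the literal vertex is in S
    have adjuv : (SATgraph X C).Adj ⟨.u c m.1 m.2, ⟨hc, hm⟩⟩ ⟨.v m.1 m.2, trivial⟩ := by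
      show _ ≠ _ ∧ (satAdj _ _ ∨ satAdj _ _)
      refine ⟨?_, Or.inl ⟨rfl, rfl⟩⟩
      intro h
      have := congrArg (fun z : SATVert X C => z.1) h
      simp at this
    have hvS : (⟨.v m.1 m.2, trivial⟩ : SATVert X C) ∈ S := by
      rcases hvc adjuv with h | h
      · exact absurd h hmS
      · exact h
    -- the opposite literal vertex is not in S
    have hnot : (⟨.v m.1 (!m.2), trivial⟩ : SATVert X C) ∉ S := by
      intro hmem
      have hne : (⟨.v m.1 m.2, trivial⟩ : SATVert X C) ≠ ⟨.v m.1 (!m.2), trivial⟩ := by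
        intro h
        have := congrArg (fun z : SATVert X C => z.1) h
        simp only [RVert.v.injEq] at this
        exact (Bool.not_ne_self m.2).symm this.2
      have h2 : ({⟨.v m.1 m.2, trivial⟩, ⟨.v m.1 (!m.2), trivial⟩} : Finset (SATVert X C)) ⊆
          T.filter fun w => satIdx w = Sum.inl m.1 := by
        intro w hw
        replace hw : w = _ ∨ w = _ := (Finset.mem_insert.1 hw).imp_right Finset.mem_singleton.1
        rcases hw with rfl | rfl
        · exact Finset.mem_filter.2 ⟨(hmemT _).2 hvS, rfl⟩
        · exact Finset.mem_filter.2 ⟨(hmemT _).2 hmem, rfl⟩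
      have hge : 2 ≤ a m.1 := by
        rw [ha]
        have := Finset.card_le_card h2
        erw [Finset.card_insert_of_notMem (Finset.notMem_singleton.2 hne), Finset.card_singleton] at this
        exact this
      have := haex m.1
      omega
    -- conclude
    have hvtrue : ((⟨.v m.1 true, trivial⟩ : SATVert X C) ∈ S) ↔ m.2 = true := by
      constructor
      · intro hmem
        by_contra hb'
        have hb'' : m.2 = false := by
          cases hx : m.2
          · rfl
          · exact absurd hx hb'
        apply hnot
        have hnb : (!m.2) = true := by simp [hb'']
        rw [hnb]
        exact hmem
      · intro hb'
        rw [hb'] at hvS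
        exact hvS
    show (if (⟨.v m.1 true, trivial⟩ : SATVert X C) ∈ S then true else false) = m.2
    by_cases hmem : (⟨.v m.1 true, trivial⟩ : SATVert X C) ∈ S
    · rw [if_pos hmem]
      exact (hvtrue.1 hmem).symm
    · rw [if_neg hmem]
      cases hx : m.2 with
      | false => rfl
      | true => exact absurd (hvtrue.2 hx) hmem
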